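/- Derivative formula for the generalized Gauss–Bonnet Hawking mass (key identity in the proof of Proposition 3.2). Let n ≥ 3, λ ≥ 0, α > 0, α̃ = (n−2)(n−3)·α, r₊ > 0, and let V, k_I, k_S be spherically symmetric radial data on [r₊,∞) (V, k_S differentiable with differentiable m_H, V > 0 on (r₊,∞)) satisfying the radial Gauss–Bonnet constraints with matter energy density μ̃ and radial momentum density J̃_ν. Then for every r > r₊: m_GB′(r) = (8π·r^{n−1}/(n−1))·[ μ̃(r) − (k_S(r)/H(r))·J̃_ν(r) ]. -/

import Mathlib

open Real Filter

/-- Mean curvature of the coordinate sphere of radius `r`: `H = (n-1)√(V r)/r`. -/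
noncomputable def sphMeanCurv (n : ℕ) (V : ℝ → ℝ) (r : ℝ) : ℝ :=
  ((n : ℝ) - 1) * Real.sqrt (V r) / r

/-- Scalar curvature of `g = V⁻¹dr² + r²·(round metric)`:
`R = (n-1) r^{1-n} (d/dr)[r^{n-2}(1 - V)]`. -/
noncomputable def sphScalCurv (n : ℕ) (V : ℝ → ℝ) (r : ℝ) : ℝ :=
  ((n : ℝ) - 1) / r ^ (n - 1) * deriv (fun ρ => ρ ^ (n - 2) * (1 - V ρ)) r

/-- The Hawking mass `m_H(r) = (r^{n-2}/2)[1 - V + r² k_S²/(n-1)²]`. -/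
noncomputable def hawkingMass (n : ℕ) (V kS : ℝ → ℝ) (r : ℝ) : ℝ :=
  r ^ (n - 2) / 2 * (1 - V r + r ^ 2 * kS r ^ 2 / ((n : ℝ) - 1) ^ 2)

/-- The generalized Gauss–Bonnet Hawking mass
`m_GB(r) = m_H(r) + λ r^n/2 + 2 α̃ m_H(r)²/r^n`. -/
noncomputable def gbHawkingMass (n : ℕ) (lam ta : ℝ) (V kS : ℝ → ℝ) (r : ℝ) : ℝ :=
  hawkingMass n V kS r + lam * r ^ n / 2 + 2 * ta * (hawkingMass n V kS r) ^ 2 / r ^ n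

/-- `N₁ = H·[k_I - k_S/(n-1) - r k_S'/(n-1)]`. -/
noncomputable def gbN1 (n : ℕ) (V kI kS : ℝ → ℝ) (r : ℝ) : ℝ :=
  sphMeanCurv n V r *
    (kI r - kS r / ((n : ℝ) - 1) - r * deriv kS r / ((n : ℝ) - 1))

/-- `𝓜 = R + (k_I + k_S)² - k_I² - k_S²/(n-1)`. -/
noncomputable def gbM (n : ℕ) (V kI kS : ℝ → ℝ) (r : ℝ) : ℝ :=
  sphScalCurv n V r + (kI r + kS r) ^ 2 - kI r ^ 2 - kS r ^ 2 / ((n : ℝ) - 1)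

/-- `μ̃⁽ᵅ⁾ = (n-1)(n-2)(n-3)·(8 m_H/r^n)·[m_H'/r^{n-1} - n m_H/(2 r^n) + (k_S/(n-1)) N₁/H]`. -/
noncomputable def gbMuAlpha (n : ℕ) (V kI kS : ℝ → ℝ) (r : ℝ) : ℝ :=
  ((n : ℝ) - 1) * ((n : ℝ) - 2) * ((n : ℝ) - 3) * (8 * hawkingMass n V kS r / r ^ n) *
    (deriv (hawkingMass n V kS) r / r ^ (n - 1)
      - (n : ℝ) * hawkingMass n V kS r / (2 * r ^ n)
      + kS r / ((n : ℝ) - 1) * gbN1 n V kI kS r / sphMeanCurv n V r)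

/-- `J̃⁽ᵅ⁾_ν = 2 N₁ (n-2)(n-3) m_H/r^n`. -/
noncomputable def gbJAlpha (n : ℕ) (V kI kS : ℝ → ℝ) (r : ℝ) : ℝ :=
  2 * gbN1 n V kI kS r * ((n : ℝ) - 2) * ((n : ℝ) - 3) * hawkingMass n V kS r / r ^ n

set_option maxHeartbeats 2000000 in
/-- Derivative formula for the generalized Gauss–Bonnet Hawking mass (key identity in the
proof of Proposition 3.2): under the radial Gauss–Bonnet constraints with matter energy
density `μ̃` and radial momentum density `J̃_ν`, for `r > r₊`:
`m_GB'(r) = (8π r^{n-1}/(n-1))·[ μ̃(r) - (k_S(r)/H(r))·J̃_ν(r) ]`. -/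
theorem gbHawkingMass_deriv (n : ℕ) (hn : 3 ≤ n) (lam α ta rp : ℝ) (hlam : 0 ≤ lam)
    (hα : 0 < α) (hta : ta = ((n : ℝ) - 2) * ((n : ℝ) - 3) * α) (hrp : 0 < rp)
    (V kI kS μ J : ℝ → ℝ)
    (hVpos : ∀ r, rp < r → 0 < V r)
    (hVd : ∀ r, rp < r → DifferentiableAt ℝ V r)
    (hkSd : ∀ r, rp < r → DifferentiableAt ℝ kS r)
    (hmHd : ∀ r, rp < r → DifferentiableAt ℝ (hawkingMass n V kS) r)
    -- Gauss–Bonnet Hamiltonian constraint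
    (hmu : ∀ r, rp < r → 16 * π * μ r =
      gbM n V kI kS r + (n : ℝ) * ((n : ℝ) - 1) * lam + α * gbMuAlpha n V kI kS r)
    -- Gauss–Bonnet momentum constraint
    (hJ : ∀ r, rp < r → 8 * π * J r = gbN1 n V kI kS r + 2 * α * gbJAlpha n V kI kS r) :
    ∀ r, rp < r →
      HasDerivAt (gbHawkingMass n lam ta V kS)
        (8 * π * r ^ (n - 1) / ((n : ℝ) - 1) *
          (μ r - kS r / sphMeanCurv n V r * J r)) r := by
  intro r hr
  obtain ⟨m, rfl⟩ : ∃ m, n = m + 3 := ⟨n - 3, by omega⟩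
  have hr0 : 0 < r := hrp.trans hr
  have hv : 0 < V r := hVpos r hr
  have hq : 0 < Real.sqrt (V r) := Real.sqrt_pos.mpr hv
  have hV' : HasDerivAt V (deriv V r) r := (hVd r hr).hasDerivAt
  have hkS' : HasDerivAt kS (deriv kS r) r := (hkSd r hr).hasDerivAt
  have hpi : (π : ℝ) ≠ 0 := Real.pi_ne_zero
  have hmH : HasDerivAt (hawkingMass (m + 3) V kS)
      (((m + 1 : ℕ) : ℝ) * r ^ m / 2 *
          (1 - V r + r ^ 2 * kS r ^ 2 / (((m + 3 : ℕ) : ℝ) - 1) ^ 2) +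
        r ^ (m + 1) / 2 *
          (0 - deriv V r +
            (((2 : ℕ) : ℝ) * r ^ 1 * kS r ^ 2 +
                r ^ 2 * (((2 : ℕ) : ℝ) * kS r ^ 1 * deriv kS r)) /
              (((m + 3 : ℕ) : ℝ) - 1) ^ 2)) r := by
    exact (((hasDerivAt_pow (m + 1) r).div_const 2).mul
      (((hasDerivAt_const r (1 : ℝ)).sub hV').add
        (((hasDerivAt_pow 2 r).mul (hkS'.pow 2)).div_const ((((m + 3 : ℕ) : ℝ) - 1) ^ 2))))
  have hpn : HasDerivAt (fun ρ : ℝ => ρ ^ (m + 3)) (((m + 3 : ℕ) : ℝ) * r ^ (m + 2)) r :=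
    hasDerivAt_pow (m + 3) r
  have htot := (hmH.add ((hpn.const_mul lam).div_const 2)).add
    (((hmH.pow 2).const_mul (2 * ta)).div hpn (pow_ne_zero _ hr0.ne'))
  have hgb : HasDerivAt (gbHawkingMass (m + 3) lam ta V kS) _ r := htot
  convert hgb using 1
  have hDD : deriv (fun ρ : ℝ => ρ ^ (m + 1) * (1 - V ρ)) r =
      ((m + 1 : ℕ) : ℝ) * r ^ (m + 1 - 1) * (1 - V r) + r ^ (m + 1) * (0 - deriv V r) :=
    ((hasDerivAt_pow (m + 1) r).mul ((hasDerivAt_const r (1 : ℝ)).sub hV')).deriv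
  have e1 := hmu r hr
  have e2 := hJ r hr
  have hmur : μ r = (gbM (m + 3) V kI kS r + ((m + 3 : ℕ) : ℝ) * (((m + 3 : ℕ) : ℝ) - 1) * lam +
      α * gbMuAlpha (m + 3) V kI kS r) / (16 * π) := by
    rw [eq_div_iff (by positivity)]; linarith
  have hJr : J r = (gbN1 (m + 3) V kI kS r + 2 * α * gbJAlpha (m + 3) V kI kS r) / (8 * π) := by
    rw [eq_div_iff (by positivity)]; linarith
  rw [hmur, hJr]
  simp only [gbM, gbMuAlpha, gbJAlpha, gbN1, sphMeanCurv, sphScalCurv,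
    show m + 3 - 2 = m + 1 from rfl, show m + 3 - 1 = m + 2 from rfl]
  rw [hmH.deriv, hDD]
  simp only [Pi.pow_apply, hawkingMass, show m + 3 - 2 = m + 1 from rfl]
  rw [hta]
  have hm2 : ((m : ℝ) + 3) - 1 ≠ 0 := by
    have h0 : (0 : ℝ) ≤ (m : ℝ) := Nat.cast_nonneg m
    intro h; linarith
  push_cast
  have hqq := hq.ne'
  field_simp
  ring
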